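/- Let B = [[0,-1,-1],[-1,1,1-n],[-1,1-n,1]] ∈ M₃(ℤ) for n ≥ 2. Then ker(B B : ℤ⁶ → ℤ³) / image((-B; B) : ℤ³ → ℤ⁶) is isomorphic to ℤ/(2n), where (-B; B) is the 6×3 matrix with upper block -B and lower block B. -/

import Mathlib

theorem stmt_8 (n : ℕ) (hn : 2 ≤ n)
    (B : Matrix (Fin 3) (Fin 3) ℤ)
    (hB : B = !![0, -1, -1; -1, 1, 1 - (n : ℤ); -1, 1 - (n : ℤ), 1]) :
    Nonempty
      ((LinearMap.ker ((Matrix.toLin' B).coprod (Matrix.toLin' B)) ⧸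
          Submodule.comap (LinearMap.ker ((Matrix.toLin' B).coprod (Matrix.toLin' B))).subtype
            (LinearMap.range ((Matrix.toLin' (-B)).prod (Matrix.toLin' B)))) ≃+ ZMod (2 * n)) := by
  haveI : NeZero (2 * n) := ⟨by omega⟩
  classical
  set K := LinearMap.ker ((Matrix.toLin' B).coprod (Matrix.toLin' B)) with hK
  let lh : ((Fin 3 → ℤ) × (Fin 3 → ℤ)) →+ ZMod (2 * n) :=
    { toFun := fun p => (((n : ℤ) * p.1 0 - p.1 1 + p.1 2 : ℤ) : ZMod (2 * n))
      map_zero' := by simp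
      map_add' := fun p q => by
        simp only [Prod.fst_add, Pi.add_apply]
        push_cast; ring }
  let f : K →ₗ[ℤ] ZMod (2 * n) := lh.toIntLinearMap.comp K.subtype
  have hker : Submodule.comap K.subtype
      (LinearMap.range ((Matrix.toLin' (-B)).prod (Matrix.toLin' B))) = LinearMap.ker f := by
    ext ⟨⟨x, y⟩, hxy⟩
    simp only [Submodule.mem_comap, Submodule.coe_subtype, LinearMap.mem_range,
      LinearMap.mem_ker, LinearMap.prod_apply, Function.prod, Prod.mk.injEq, f, lh,
      LinearMap.comp_apply, AddMonoidHom.coe_toIntLinearMap, AddMonoidHom.coe_mk,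
      ZeroHom.coe_mk, Matrix.toLin'_apply]
    constructor
    · rintro ⟨z, hz1, hz2⟩
      have hx : ∀ i, x i = ((-B).mulVec z) i := fun i => by rw [hz1]
      have h0 := hx 0
      have h1 := hx 1
      have h2 := hx 2
      subst hB
      simp [Matrix.mulVec, dotProduct, Fin.sum_univ_three] at h0 h1 h2
      have key : (n : ℤ) * x 0 - x 1 + x 2 = (2 * n) * z 1 := by
        rw [h0, h1, h2]; ring
      rw [key]
      have h2n : ((2 * n : ℕ) : ZMod (2 * n)) = 0 := ZMod.natCast_self _
      push_cast at h2n ⊢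
      linear_combination (↑(z 1) : ZMod (2 * n)) * h2n
    · intro h
      obtain ⟨k, hk⟩ := (ZMod.intCast_zmod_eq_zero_iff_dvd _ _).1 h
      -- y = -x from injectivity of B
      have hmem : Matrix.toLin' B x + Matrix.toLin' B y = 0 := hxy
      have hsum : ∀ i, (B.mulVec (x + y)) i = 0 := by
        intro i
        rw [Matrix.mulVec_add]
        rw [← Matrix.toLin'_apply, ← Matrix.toLin'_apply]
        rw [show (Matrix.toLin' B) x + (Matrix.toLin' B) y = 0 from hmem]
        rfl
      have e0 := hsum 0
      have e1 := hsum 1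
      have e2 := hsum 2
      subst hB
      simp [Matrix.mulVec, dotProduct, Fin.sum_univ_three, Pi.add_apply] at e0 e1 e2
      have hn0 : (n : ℤ) ≠ 0 := by exact_mod_cast (by omega : n ≠ 0)
      have h12 : (n : ℤ) * ((x 1 + y 1) - (x 2 + y 2)) = 0 := by linear_combination e1 - e2
      have h12' : (x 1 + y 1) = (x 2 + y 2) := by
        rcases mul_eq_zero.1 h12 with h | h
        · exact absurd h hn0
        · linarith
      have hu1 : x 1 + y 1 = 0 := by linarith
      have hu2 : x 2 + y 2 = 0 := by linarith
      have hu0 : x 0 + y 0 = 0 := by linear_combination -e1 + hu1 + (1 - (n:ℤ)) * hu2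
      push_cast at hk
      refine ⟨![-(((n:ℤ)-1)*x 0 - x 1 - n*k), k, x 0 - k], ?_, ?_⟩
      · funext i
        fin_cases i
        · simp [Matrix.mulVec, dotProduct, Fin.sum_univ_three]
        · simp [Matrix.mulVec, dotProduct, Fin.sum_univ_three]; ring
        · simp [Matrix.mulVec, dotProduct, Fin.sum_univ_three]; linear_combination -hk
      · funext i
        fin_cases i
        · simp [Matrix.mulVec, dotProduct, Fin.sum_univ_three]; linear_combination -hu0
        · simp [Matrix.mulVec, dotProduct, Fin.sum_univ_three]; linear_combination -hu1
        · simp [Matrix.mulVec, dotProduct, Fin.sum_univ_three]; linear_combination hk - hu2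
  have hsurj : Function.Surjective f := by
    intro c
    obtain ⟨m, hm⟩ := ZMod.intCast_surjective c
    have hmem : (![0, -m, 0], ![0, m, 0]) ∈ K := by
      simp only [hK, LinearMap.mem_ker, LinearMap.coprod_apply, Matrix.toLin'_apply]
      funext i
      fin_cases i <;> simp [Matrix.mulVec, dotProduct, Fin.sum_univ_three]
    refine ⟨⟨(![0, -m, 0], ![0, m, 0]), hmem⟩, ?_⟩
    simp only [f, lh, LinearMap.comp_apply, AddMonoidHom.coe_toIntLinearMap,
      AddMonoidHom.coe_mk, ZeroHom.coe_mk, Submodule.coe_subtype]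
    simpa using hm
  exact ⟨((Submodule.quotEquivOfEq _ _ hker).trans
      (f.quotKerEquivOfSurjective hsurj)).toAddEquiv⟩
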